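/- Let P̄_0 be a non-separable preference over 2^𝒪 with t(P̄_0) ≠ 𝒪. Then the tops-only extension of the rule f^≥ to the domain 𝒮 ∪ {P̄_0} violates participation: there exist a society N with |N| ≥ 2, a voter i ∈ N, and a profile P_N ∈ (𝒮 ∪ {P̄_0})^N such that f(P_{N\{i}}) P_i f(P_N). -/

import Mathlib

/-! ## Basic framework: preferences, profiles, voting rules, axioms -/

/-- A preference is a strict linear order on the set `A` of alternatives, encoded as a
`LinearOrder` structure on `A`; alternative `x` is strictly preferred to `y` iff `y < x`
(i.e. "greater is better"). -/
abbrev Pref (A : Type*) := LinearOrder A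

/-- Strict preference: `x` is strictly preferred to `y` under `p`. -/
def Pref.pref {A : Type*} (p : Pref A) (x y : A) : Prop := p.lt y x

/-- Weak preference (the weak counterpart `R` of the strict preference `P`):
`x` is weakly preferred to `y` under `p`. -/
def Pref.wpref {A : Type*} (p : Pref A) (x y : A) : Prop := p.le y x

/-- The top (most preferred) alternative of a preference. -/
noncomputable def Pref.top {A : Type*} [Fintype A] [Nonempty A] (p : Pref A) : A :=
  @Finset.max' A p Finset.univ Finset.univ_nonempty

/-- The bottom (least preferred) alternative of a preference. -/
noncomputable def Pref.bot {A : Type*} [Fintype A] [Nonempty A] (p : Pref A) : A :=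
  @Finset.min' A p Finset.univ Finset.univ_nonempty

/-- A profile over the society `N` (a finite set of voters, indexed by naturals):
it assigns a preference to each member of `N`. -/
abbrev Profile (A : Type*) (N : Finset ℕ) := (i : ℕ) → i ∈ N → Pref A

/-- The profile `P` takes values in the domain `D` of preferences. -/
def Profile.inDomain {A : Type*} {N : Finset ℕ} (P : Profile A N) (D : Set (Pref A)) : Prop :=
  ∀ i (hi : i ∈ N), P i hi ∈ D

/-- A (variable-population) voting rule: it assigns an alternative to every society
together with a profile over it. -/
abbrev Rule (A : Type*) := (N : Finset ℕ) → Profile A N → A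

/-- Ontoness on the domain `D`: for every society and every alternative, some
`D`-profile realizes that alternative. -/
def OntoOn {A : Type*} (D : Set (Pref A)) (f : Rule A) : Prop :=
  ∀ N : Finset ℕ, N.Nonempty → ∀ a : A, ∃ P : Profile A N, P.inDomain D ∧ f N P = a

/-- Tops-onliness on the domain `D`: two `D`-profiles with the same tops get the
same outcome. -/
def TopsOnlyOn {A : Type*} [Fintype A] [Nonempty A] (D : Set (Pref A)) (f : Rule A) : Prop :=
  ∀ N : Finset ℕ, N.Nonempty → ∀ P P' : Profile A N, P.inDomain D → P'.inDomain D →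
    (∀ i (hi : i ∈ N), (P i hi).top = (P' i hi).top) → f N P = f N P'

/-- False-name-proofness on the domain `D`: if a voter `i` of the society `N` casts,
under fresh identities `N'`, extra votes identical to her own preference, the outcome
does not improve for her. -/
def FalseNameProofOn {A : Type*} (D : Set (Pref A)) (f : Rule A) : Prop :=
  ∀ N N' : Finset ℕ, N.Nonempty → N'.Nonempty → Disjoint N N' →
    ∀ P : Profile A (N ∪ N'), P.inDomain D →
      ∀ i (hi : i ∈ N),
        (∀ j (hj : j ∈ N'),
            P j (Finset.mem_union_right N hj) = P i (Finset.mem_union_left N' hi)) →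
        (P i (Finset.mem_union_left N' hi)).wpref
          (f N (fun j hj => P j (Finset.mem_union_left N' hj)))
          (f (N ∪ N') P)

/-- Participation on the domain `D`: no voter gains by abstaining. -/
def ParticipationOn {A : Type*} (D : Set (Pref A)) (f : Rule A) : Prop :=
  ∀ N : Finset ℕ, 2 ≤ N.card → ∀ P : Profile A N, P.inDomain D →
    ∀ i (hi : i ∈ N),
      (P i hi).wpref (f N P) (f (N.erase i) (fun j hj => P j (Finset.mem_of_mem_erase hj)))

lemma mem_of_mem_image_perm {σ : Equiv.Perm ℕ} {N : Finset ℕ} {j : ℕ}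
    (hj : j ∈ N.image σ) : σ.symm j ∈ N := by
  obtain ⟨i, hi, rfl⟩ := Finset.mem_image.mp hj
  simpa using hi

/-- The permuted profile `σ(P_N)` over the society `σ(N)`: voter `σ i` gets the
preference `P i`. -/
def permProfile {A : Type*} (σ : Equiv.Perm ℕ) {N : Finset ℕ} (P : Profile A N) :
    Profile A (N.image σ) :=
  fun j hj => P (σ.symm j) (mem_of_mem_image_perm hj)

/-- Anonymity on the domain `D`: permuting the voters' identities does not change
the outcome. -/
def AnonymousOn {A : Type*} (D : Set (Pref A)) (f : Rule A) : Prop :=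
  ∀ (σ : Equiv.Perm ℕ) (N : Finset ℕ), N.Nonempty → ∀ P : Profile A N, P.inDomain D →
    f (N.image σ) (permProfile σ P) = f N P

/-- Relabeling a preference along a permutation `γ` of the alternatives: in the new
preference, `γ x` is strictly preferred to `γ y` iff `x` was strictly preferred to `y`. -/
noncomputable def Pref.relabel {A : Type*} (p : Pref A) (γ : Equiv.Perm A) : Pref A :=
  @LinearOrder.lift' A A p γ.symm γ.symm.injective

/-- Neutrality on the domain `D`: relabeling the alternatives by a permutation `γ`
relabels the outcome accordingly. -/
def NeutralOn {A : Type*} (D : Set (Pref A)) (f : Rule A) : Prop :=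
  ∀ (γ : Equiv.Perm A) (N : Finset ℕ), N.Nonempty → ∀ P : Profile A N, P.inDomain D →
    γ (f N P) = f N (fun i hi => (P i hi).relabel γ)

/-! ## The domain of preferences over subsets of a set `O` of objects -/

/-- Object neutrality: permuting the objects by `μ` (which permutes every subset of
objects pointwise) relabels the outcome accordingly. -/
def ObjectNeutralOn {O : Type*} [Fintype O] [DecidableEq O]
    (D : Set (Pref (Finset O))) (f : Rule (Finset O)) : Prop :=
  ∀ (μ : Equiv.Perm O) (N : Finset ℕ), N.Nonempty →
    ∀ P : Profile (Finset O) N, P.inDomain D →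
      (f N P).image μ = f N (fun i hi => (P i hi).relabel μ.finsetCongr)

/-- A preference over subsets of objects is separable if adding an object `x ∉ S` to a
set `S` improves the set exactly when `{x}` is preferred to `∅`. -/
def Separable {O : Type*} [Fintype O] [DecidableEq O] (p : Pref (Finset O)) : Prop :=
  ∀ (S : Finset O) (x : O), x ∉ S → (p.pref (insert x S) S ↔ p.pref {x} (∅ : Finset O))

/-- The domain of separable preferences over subsets of objects. -/
def SepDom (O : Type*) [Fintype O] [DecidableEq O] : Set (Pref (Finset O)) :=
  {p | Separable p}

/-- `t(P_N)`: the set of distinct top sets of the profile `P`. -/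
noncomputable def distinctTops {O : Type*} [Fintype O] [DecidableEq O] {N : Finset ℕ}
    (P : Profile (Finset O) N) : Finset (Finset O) :=
  N.attach.image fun i => (P i.1 i.2).top

/-- The rule `f^>`: an object is chosen iff it belongs to strictly more than half of the
distinct top sets of the profile. -/
noncomputable def fGt (O : Type*) [Fintype O] [DecidableEq O] : Rule (Finset O) :=
  fun N P =>
    Finset.univ.filter fun x =>
      (distinctTops P).card < 2 * ((distinctTops P).filter fun T => x ∈ T).card

/-- The rule `f^≥`: an object is chosen iff it belongs to at least half of the
distinct top sets of the profile. -/
noncomputable def fGe (O : Type*) [Fintype O] [DecidableEq O] : Rule (Finset O) :=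
  fun N P =>
    Finset.univ.filter fun x =>
      (distinctTops P).card ≤ 2 * ((distinctTops P).filter fun T => x ∈ T).card

/-- `g` is the tops-only extension to the domain `Dbig` (⊇ separable preferences) of the
tops-only rule `f` defined on the separable domain: on every `Dbig`-profile `P`, `g`
agrees with the value of `f` at any separable profile `Q` having the same tops as `P`. -/
def IsTopsOnlyExtensionOn {O : Type*} [Fintype O] [DecidableEq O]
    (Dbig : Set (Pref (Finset O))) (f g : Rule (Finset O)) : Prop :=
  ∀ N : Finset ℕ, N.Nonempty →
    ∀ P : Profile (Finset O) N, P.inDomain Dbig →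
      ∀ Q : Profile (Finset O) N, Q.inDomain (SepDom O) →
        (∀ i (hi : i ∈ N), (P i hi).top = (Q i hi).top) → g N P = f N Q


/-! ## Auxiliary machinery for the proof -/

section Aux

variable {O : Type*} [Fintype O] [DecidableEq O]

noncomputable def util (T S : Finset O) : ℤ := ∑ o ∈ S, (if o ∈ T then (1:ℤ) else -1)

noncomputable def sepKey (T : Finset O) (S : Finset O) : Lex (ℤ × Fin (Fintype.card (Finset O))) :=
  toLex (util T S, Fintype.equivFin (Finset O) S)

lemma sepKey_inj (T : Finset O) : Function.Injective (sepKey T) := by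
  intro a b h
  have := congrArg (fun z => (ofLex z).2) h
  simpa using (Fintype.equivFin (Finset O)).injective this

noncomputable def sepPref (T : Finset O) : Pref (Finset O) :=
  LinearOrder.lift' (sepKey T) (sepKey_inj T)

lemma sepPref_lt_iff (T S S' : Finset O) :
    (sepPref T).lt S S' ↔ util T S < util T S' ∨
      (util T S = util T S' ∧ Fintype.equivFin (Finset O) S < Fintype.equivFin (Finset O) S') := by
  show sepKey T S < sepKey T S' ↔ _
  exact Prod.Lex.lt_iff

lemma util_insert (T S : Finset O) (x : O) (hx : x ∉ S) :
    util T (insert x S) = (if x ∈ T then (1:ℤ) else -1) + util T S := by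
  simp [util, Finset.sum_insert hx]

lemma sepPref_sep (T : Finset O) : Separable (sepPref T) := by
  intro S x hx
  have h1 : (sepPref T).pref (insert x S) S ↔ x ∈ T := by
    rw [Pref.pref, sepPref_lt_iff, util_insert T S x hx]
    by_cases hT : x ∈ T <;> simp [hT]
  have h2 : (sepPref T).pref {x} (∅:Finset O) ↔ x ∈ T := by
    have : ({x} : Finset O) = insert x ∅ := rfl
    rw [Pref.pref, this, sepPref_lt_iff, util_insert T ∅ x (by simp)]
    by_cases hT : x ∈ T <;> simp [util, hT]
  rw [h1, h2]

lemma util_lt_of_ne (T S : Finset O) (h : S ≠ T) : util T S < util T T := by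
  have hTT : util T T = (T.card : ℤ) := by
    rw [util, Finset.sum_ite_of_true (fun o ho => ho)]; simp
  have hsplit : util T S = ((S.filter (· ∈ T)).card : ℤ) - ((S.filter (· ∉ T)).card : ℤ) := by
    rw [util, Finset.sum_ite]
    push_cast
    simp
    ring
  have hsub : S.filter (· ∈ T) ⊆ T := fun o ho => (Finset.mem_filter.mp ho).2
  have hle : (S.filter (· ∈ T)).card ≤ T.card := Finset.card_le_card hsub
  rcases lt_or_eq_of_le hle with hlt | heq
  · have : (0:ℤ) ≤ ((S.filter (· ∉ T)).card : ℤ) := by positivity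
    omega
  · have hfeq : S.filter (· ∈ T) = T := Finset.eq_of_subset_of_card_le hsub (le_of_eq heq.symm)
    have hTS : T ⊆ S := by rw [← hfeq]; exact Finset.filter_subset _ _
    have hne : ¬ S ⊆ T := fun hST => h (le_antisymm hST hTS)
    obtain ⟨z, hzS, hzT⟩ := Finset.not_subset.mp hne
    have : 0 < (S.filter (· ∉ T)).card :=
      Finset.card_pos.mpr ⟨z, Finset.mem_filter.mpr ⟨hzS, hzT⟩⟩
    omega

lemma sepPref_le_of_lt (T A B : Finset O) (h : (sepPref T).lt A B) : (sepPref T).le A B :=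
  @le_of_lt _ (sepPref T).toPreorder _ _ h

lemma sepPref_le_refl (T A : Finset O) : (sepPref T).le A A := @le_refl _ (sepPref T).toPreorder A

lemma sepPref_top (T : Finset O) : (sepPref T).top = T := by
  have hle : ∀ S : Finset O, (sepPref T).le S T := by
    intro S
    rcases eq_or_ne S T with rfl | h
    · exact sepPref_le_refl _ _
    · exact sepPref_le_of_lt T S T
        ((sepPref_lt_iff T S T).mpr (Or.inl (util_lt_of_ne T S h)))
  have h1 := @Finset.max'_le (Finset O) (sepPref T) Finset.univ Finset.univ_nonempty T
    (fun S _ => hle S)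
  have h2 := @Finset.le_max' (Finset O) (sepPref T) Finset.univ T (Finset.mem_univ T)
  exact @le_antisymm _ (sepPref T).toPartialOrder _ _ h1 h2

lemma le_top' {A : Type*} [Fintype A] [Nonempty A] (p : Pref A) (S : A) : p.le S p.top :=
  @Finset.le_max' _ p _ _ (Finset.mem_univ S)

lemma not_pref_top {A : Type*} [Fintype A] [Nonempty A] (p : Pref A) (S : A) :
    ¬ p.pref S p.top := fun h =>
  absurd (le_top' p S) (@not_le_of_gt _ p.toPreorder _ _ h)

lemma pref_total {A : Type*} (p : Pref A) (a b : A) (hne : a ≠ b) (h : ¬ p.pref a b) :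
    p.pref b a := by
  rcases @lt_trichotomy _ p a b with h1 | h1 | h1
  · exact h1
  · exact absurd h1 hne
  · exact absurd h1 h

lemma distinctTops_eq {N : Finset ℕ} (P : Profile (Finset O) N) (ts : Finset (Finset O))
    (h : ∀ T : Finset O, (∃ i, ∃ hi : i ∈ N, (P i hi).top = T) ↔ T ∈ ts) :
    distinctTops P = ts := by
  ext T
  simp only [distinctTops, Finset.mem_image, Finset.mem_attach, true_and, Subtype.exists]
  exact h T

/-- Outcome of `fGe` when the distinct tops are a pair `{insert x B, B}`. -/
lemma fGe_pair' {N : Finset ℕ} (P : Profile (Finset O) N) (B : Finset O) (x : O)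
    (hxB : x ∉ B) (h : distinctTops P = {insert x B, B}) : fGe O N P = insert x B := by
  have hne : insert x B ≠ B := by simp [hxB]
  have hcard : ({insert x B, B} : Finset (Finset O)).card = 2 := by
    rw [Finset.card_insert_of_notMem (by simp [hne]), Finset.card_singleton]
  ext y
  simp only [fGe, h, Finset.mem_filter, Finset.mem_univ, true_and, hcard]
  rw [Finset.card_filter, Finset.sum_insert (by simp [hne]), Finset.sum_singleton]
  by_cases h1 : y ∈ B
  · have h2 : y ∈ insert x B := Finset.mem_insert_of_mem h1
    simp [h1, h2]
  · by_cases h2 : y ∈ insert x B <;> simp [h1, h2] <;> omega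

/-- Outcome of `fGe` when the distinct tops are `{T, insert x B, B}` with `x ∉ T`. -/
lemma fGe_triple_II {N : Finset ℕ} (P : Profile (Finset O) N) (T B : Finset O) (x : O)
    (hxB : x ∉ B) (hxT : x ∉ T) (hTA : T ≠ insert x B) (hTB : T ≠ B)
    (h : distinctTops P = {T, insert x B, B}) : fGe O N P = B := by
  have hne : insert x B ≠ B := by simp [hxB]
  have hcard : ({T, insert x B, B} : Finset (Finset O)).card = 3 := by
    rw [Finset.card_insert_of_notMem (by simp [hTA, hTB]),
      Finset.card_insert_of_notMem (by simp [hne]), Finset.card_singleton]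
  ext y
  simp only [fGe, h, Finset.mem_filter, Finset.mem_univ, true_and, hcard]
  rw [Finset.card_filter, Finset.sum_insert (by simp [hTA, hTB]),
    Finset.sum_insert (by simp [hne]), Finset.sum_singleton]
  by_cases hyB : y ∈ B
  · have hyA : y ∈ insert x B := Finset.mem_insert_of_mem hyB
    by_cases hyT : y ∈ T <;> simp [hyB, hyA, hyT] <;> omega
  · by_cases hyA : y ∈ insert x B
    · have hyx : y = x := by
        rcases Finset.mem_insert.mp hyA with rfl | hc
        · rfl
        · exact absurd hc hyB
      have hyT : y ∉ T := by rw [hyx]; exact hxT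
      simp [hyB, hyA, hyT] <;> omega
    · by_cases hyT : y ∈ T <;> simp [hyB, hyA, hyT] <;> omega

/-- Outcome of `fGe` when the distinct tops are `{insert x A, A, C}` with `x ∉ A ∪ C`. -/
lemma fGe_triple_I {N : Finset ℕ} (P : Profile (Finset O) N) (A C : Finset O) (x : O)
    (hxA : x ∉ A) (hxC : x ∉ C) (hCA : C ≠ A) (hCB : C ≠ insert x A)
    (h : distinctTops P = {insert x A, A, C}) : fGe O N P = A := by
  have hne : insert x A ≠ A := by simp [hxA]
  have hcard : ({insert x A, A, C} : Finset (Finset O)).card = 3 := by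
    rw [Finset.card_insert_of_notMem (by simp [hne, Ne.symm hCB]),
      Finset.card_insert_of_notMem (by simp [Ne.symm hCA]), Finset.card_singleton]
  ext y
  simp only [fGe, h, Finset.mem_filter, Finset.mem_univ, true_and, hcard]
  rw [Finset.card_filter, Finset.sum_insert (by simp [hne, Ne.symm hCB]),
    Finset.sum_insert (by simp [Ne.symm hCA]), Finset.sum_singleton]
  by_cases hyA : y ∈ A
  · have hyB : y ∈ insert x A := Finset.mem_insert_of_mem hyA
    by_cases hyC : y ∈ C <;> simp [hyA, hyB, hyC] <;> omega
  · by_cases hyB : y ∈ insert x A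
    · have hyx : y = x := by
        rcases Finset.mem_insert.mp hyB with rfl | hc
        · rfl
        · exact absurd hc hyA
      have hyC : y ∉ C := by rw [hyx]; exact hxC
      simp [hyA, hyB, hyC] <;> omega
    · by_cases hyC : y ∈ C <;> simp [hyA, hyB, hyC] <;> omega

/-- Outcome of `fGe` when the distinct tops are `{T, insert x A, A, C}` with `x ∈ T`,
`x ∉ A ∪ C` and `C ∩ T ⊆ A`. -/
lemma fGe_quad_I {N : Finset ℕ} (P : Profile (Finset O) N) (T A C : Finset O) (x : O)
    (hxA : x ∉ A) (hxT : x ∈ T) (hxC : x ∉ C) (hCT : C ∩ T ⊆ A)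
    (hTB : T ≠ insert x A) (hTA : T ≠ A) (hTC : T ≠ C) (hCA : C ≠ A) (hCB : C ≠ insert x A)
    (h : distinctTops P = {T, insert x A, A, C}) : fGe O N P = insert x A := by
  have hne : insert x A ≠ A := by simp [hxA]
  have hcard : ({T, insert x A, A, C} : Finset (Finset O)).card = 4 := by
    rw [Finset.card_insert_of_notMem (by simp [hTB, hTA, hTC]),
      Finset.card_insert_of_notMem (by simp [hne, Ne.symm hCB]),
      Finset.card_insert_of_notMem (by simp [Ne.symm hCA]), Finset.card_singleton]
  ext y
  simp only [fGe, h, Finset.mem_filter, Finset.mem_univ, true_and, hcard]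
  rw [Finset.card_filter, Finset.sum_insert (by simp [hTB, hTA, hTC]),
    Finset.sum_insert (by simp [hne, Ne.symm hCB]),
    Finset.sum_insert (by simp [Ne.symm hCA]), Finset.sum_singleton]
  by_cases hyA : y ∈ A
  · have hyB : y ∈ insert x A := Finset.mem_insert_of_mem hyA
    by_cases hyT : y ∈ T <;> by_cases hyC : y ∈ C <;> simp [hyA, hyB, hyT, hyC] <;> omega
  · by_cases hyB : y ∈ insert x A
    · have hyx : y = x := by
        rcases Finset.mem_insert.mp hyB with rfl | hc
        · rfl
        · exact absurd hc hyA
      have hyT : y ∈ T := by rw [hyx]; exact hxT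
      have hyC : y ∉ C := by rw [hyx]; exact hxC
      simp [hyA, hyB, hyT, hyC] <;> omega
    · have hnot : ¬ (y ∈ T ∧ y ∈ C) := by
        rintro ⟨h1, h2⟩
        exact hyA (hCT (Finset.mem_inter.mpr ⟨h2, h1⟩))
      by_cases hyT : y ∈ T
      · have hyC : y ∉ C := fun hc => hnot ⟨hyT, hc⟩
        simp [hyA, hyB, hyT, hyC] <;> omega
      · by_cases hyC : y ∈ C <;> simp [hyA, hyB, hyT, hyC] <;> omega

end Aux

/-- If `P0` is a non-separable preference whose top set is not the whole
set of objects, then every tops-only extension of `f^≥` to the domain `𝒮 ∪ {P0}` violates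
participation: some voter of some society strictly prefers the outcome obtained by
abstaining. -/
theorem stmt_9 {O : Type*} [Fintype O] [DecidableEq O] (hO : 2 ≤ Fintype.card O)
    (P0 : Pref (Finset O)) (hns : ¬ Separable P0) (htop : P0.top ≠ (Finset.univ : Finset O)) :
    ∀ g : Rule (Finset O), IsTopsOnlyExtensionOn (SepDom O ∪ {P0}) (fGe O) g →
      ∃ (N : Finset ℕ) (_ : 2 ≤ N.card) (i : ℕ) (hi : i ∈ N) (P : Profile (Finset O) N),
        P.inDomain (SepDom O ∪ {P0}) ∧
        (P i hi).pref (g (N.erase i) (fun j hj => P j (Finset.mem_of_mem_erase hj)))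
          (g N P) := by
  intro g hg
  -- extract a violation of separability
  have hex : ∃ x A, x ∉ A ∧ ((x ∈ P0.top ∧ P0.pref A (insert x A)) ∨
      (x ∉ P0.top ∧ P0.pref (insert x A) A)) := by
    rw [Separable] at hns
    push_neg at hns
    obtain ⟨S, x, hxS, hne⟩ := hns
    rcases hne with ⟨h1, h2⟩ | ⟨h1, h2⟩
    · have h2' : P0.pref (∅ : Finset O) {x} :=
        pref_total P0 {x} ∅ (Finset.singleton_ne_empty x) h2
      by_cases hxT : x ∈ P0.top
      · exact ⟨x, ∅, Finset.notMem_empty x, Or.inl ⟨hxT, h2'⟩⟩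
      · exact ⟨x, S, hxS, Or.inr ⟨hxT, h1⟩⟩
    · have h1' : P0.pref S (insert x S) :=
        pref_total P0 (insert x S) S (by simp [hxS]) h1
      by_cases hxT : x ∈ P0.top
      · exact ⟨x, S, hxS, Or.inl ⟨hxT, h1'⟩⟩
      · exact ⟨x, ∅, Finset.notMem_empty x, Or.inr ⟨hxT, h2⟩⟩
  obtain ⟨x, A, hxA, hcase⟩ := hex
  have hzex : ∃ z, z ∉ P0.top := by
    by_contra hc
    push_neg at hc
    exact htop (Finset.eq_univ_iff_forall.mpr hc)
  obtain ⟨z, hz⟩ := hzex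
  rcases hcase with ⟨hxT, hpref⟩ | ⟨hxT, hpref⟩
  · -- Type I : x ∈ top, A strictly preferred to insert x A
    have hT0B : P0.top ≠ insert x A := fun h => not_pref_top P0 A (h ▸ hpref)
    have hT0A : P0.top ≠ A := fun h => hxA (h ▸ hxT)
    have hC : ∃ C : Finset O, x ∉ C ∧ C ∩ P0.top ⊆ A ∧ C ≠ A ∧ C ≠ insert x A ∧
        C ≠ P0.top := by
      by_cases hA : A = ∅
      · refine ⟨{z}, ?_, ?_, ?_, ?_, ?_⟩
        · simp only [Finset.mem_singleton]
          rintro rfl; exact hz hxT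
        · intro o ho
          simp only [Finset.mem_inter, Finset.mem_singleton] at ho
          exact absurd (ho.1 ▸ ho.2) hz
        · rw [hA]; exact Finset.singleton_ne_empty z
        · intro h
          have : x ∈ ({z} : Finset O) := h ▸ Finset.mem_insert_self x A
          simp only [Finset.mem_singleton] at this
          exact hz (this ▸ hxT)
        · intro h; exact hz (h ▸ Finset.mem_singleton_self z)
      · refine ⟨∅, Finset.notMem_empty x, by simp, fun h => hA h.symm, ?_, ?_⟩
        · exact fun h => (Finset.insert_ne_empty x A) h.symm
        · intro h; rw [← h] at hxT; exact Finset.notMem_empty x hxT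
    obtain ⟨C, hxC, hCT, hCA, hCB, hCT0⟩ := hC
    refine ⟨{0, 1, 2, 3}, by decide, 0, by decide,
      (fun j _ => if j = 0 then P0 else if j = 1 then sepPref (insert x A)
        else if j = 2 then sepPref A else sepPref C), ?_, ?_⟩
    · intro j hj
      have hj' : j = 0 ∨ j = 1 ∨ j = 2 ∨ j = 3 := by
        simpa using hj
      rcases hj' with rfl | rfl | rfl | rfl
      · exact Or.inr rfl
      · exact Or.inl (sepPref_sep _)
      · exact Or.inl (sepPref_sep _)
      · exact Or.inl (sepPref_sep _)
    · have hgN : g {0, 1, 2, 3} (fun j _ => if j = 0 then P0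
          else if j = 1 then sepPref (insert x A)
          else if j = 2 then sepPref A else sepPref C) = insert x A := by
        rw [hg {0, 1, 2, 3} ⟨0, by decide⟩ _
          (by intro j hj
              have hj' : j = 0 ∨ j = 1 ∨ j = 2 ∨ j = 3 := by simpa using hj
              rcases hj' with rfl | rfl | rfl | rfl
              · exact Or.inr rfl
              · exact Or.inl (sepPref_sep _)
              · exact Or.inl (sepPref_sep _)
              · exact Or.inl (sepPref_sep _))
          (fun j _ => if j = 0 then sepPref P0.top
            else if j = 1 then sepPref (insert x A)
            else if j = 2 then sepPref A else sepPref C)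
          (by intro j hj
              have hj' : j = 0 ∨ j = 1 ∨ j = 2 ∨ j = 3 := by simpa using hj
              rcases hj' with rfl | rfl | rfl | rfl <;> exact sepPref_sep _)
          (by intro j hj
              have hj' : j = 0 ∨ j = 1 ∨ j = 2 ∨ j = 3 := by simpa using hj
              rcases hj' with rfl | rfl | rfl | rfl
              · show P0.top = (sepPref P0.top).top
                rw [sepPref_top]
              · rfl
              · rfl
              · rfl)]
        apply fGe_quad_I _ P0.top A C x hxA hxT hxC hCT hT0B hT0A (Ne.symm hCT0) hCA hCB
        apply distinctTops_eq
        intro T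
        constructor
        · rintro ⟨i, hi, rfl⟩
          have hi' : i = 0 ∨ i = 1 ∨ i = 2 ∨ i = 3 := by simpa using hi
          rcases hi' with rfl | rfl | rfl | rfl <;>
            simp [sepPref_top, Finset.mem_insert]
        · intro hT
          simp only [Finset.mem_insert, Finset.mem_singleton] at hT
          rcases hT with rfl | rfl | rfl | rfl
          · exact ⟨0, by decide, by simp [sepPref_top]⟩
          · exact ⟨1, by decide, by simp [sepPref_top]⟩
          · exact ⟨2, by decide, by simp [sepPref_top]⟩
          · exact ⟨3, by decide, by simp [sepPref_top]⟩
      have hgE : g (({0, 1, 2, 3} : Finset ℕ).erase 0)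
          (fun j hj => (fun j _ => if j = 0 then P0
            else if j = 1 then sepPref (insert x A)
            else if j = 2 then sepPref A else sepPref C) j (Finset.mem_of_mem_erase hj))
          = A := by
        have hmem : ∀ j, j ∈ (({0, 1, 2, 3} : Finset ℕ).erase 0) →
            j = 1 ∨ j = 2 ∨ j = 3 := by decide
        rw [hg (({0, 1, 2, 3} : Finset ℕ).erase 0) ⟨1, by decide⟩ _
          (by intro j hj
              rcases hmem j hj with rfl | rfl | rfl
              · exact Or.inl (sepPref_sep _)
              · exact Or.inl (sepPref_sep _)
              · exact Or.inl (sepPref_sep _))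
          _
          (by intro j hj
              rcases hmem j hj with rfl | rfl | rfl
              · exact sepPref_sep _
              · exact sepPref_sep _
              · exact sepPref_sep _)
          (fun j hj => rfl)]
        apply fGe_triple_I _ A C x hxA hxC hCA hCB
        apply distinctTops_eq
        intro T
        constructor
        · rintro ⟨i, hi, rfl⟩
          rcases hmem i hi with rfl | rfl | rfl <;>
            simp [sepPref_top, Finset.mem_insert]
        · intro hT
          simp only [Finset.mem_insert, Finset.mem_singleton] at hT
          rcases hT with rfl | rfl | rfl
          · exact ⟨1, by decide, by simp [sepPref_top]⟩
          · exact ⟨2, by decide, by simp [sepPref_top]⟩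
          · exact ⟨3, by decide, by simp [sepPref_top]⟩
      rw [hgN, hgE]
      exact hpref
  · -- Type II : x ∉ top, insert x A strictly preferred to A
    have hT0B : P0.top ≠ insert x A := fun h => hxT (h ▸ Finset.mem_insert_self x A)
    have hT0A : P0.top ≠ A := fun h => not_pref_top P0 (insert x A) (h ▸ hpref)
    refine ⟨{0, 1, 2}, by decide, 0, by decide,
      (fun j _ => if j = 0 then P0 else if j = 1 then sepPref (insert x A)
        else sepPref A), ?_, ?_⟩
    · intro j hj
      have hj' : j = 0 ∨ j = 1 ∨ j = 2 := by simpa using hj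
      rcases hj' with rfl | rfl | rfl
      · exact Or.inr rfl
      · exact Or.inl (sepPref_sep _)
      · exact Or.inl (sepPref_sep _)
    · have hgN : g {0, 1, 2} (fun j _ => if j = 0 then P0
          else if j = 1 then sepPref (insert x A) else sepPref A) = A := by
        rw [hg {0, 1, 2} ⟨0, by decide⟩ _
          (by intro j hj
              have hj' : j = 0 ∨ j = 1 ∨ j = 2 := by simpa using hj
              rcases hj' with rfl | rfl | rfl
              · exact Or.inr rfl
              · exact Or.inl (sepPref_sep _)
              · exact Or.inl (sepPref_sep _))
          (fun j _ => if j = 0 then sepPref P0.top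
            else if j = 1 then sepPref (insert x A) else sepPref A)
          (by intro j hj
              have hj' : j = 0 ∨ j = 1 ∨ j = 2 := by simpa using hj
              rcases hj' with rfl | rfl | rfl <;> exact sepPref_sep _)
          (by intro j hj
              have hj' : j = 0 ∨ j = 1 ∨ j = 2 := by simpa using hj
              rcases hj' with rfl | rfl | rfl
              · show P0.top = (sepPref P0.top).top
                rw [sepPref_top]
              · rfl
              · rfl)]
        apply fGe_triple_II _ P0.top A x hxA hxT hT0B hT0A
        apply distinctTops_eq
        intro T
        constructor
        · rintro ⟨i, hi, rfl⟩
          have hi' : i = 0 ∨ i = 1 ∨ i = 2 := by simpa using hi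
          rcases hi' with rfl | rfl | rfl <;>
            simp [sepPref_top, Finset.mem_insert]
        · intro hT
          simp only [Finset.mem_insert, Finset.mem_singleton] at hT
          rcases hT with rfl | rfl | rfl
          · exact ⟨0, by decide, by simp [sepPref_top]⟩
          · exact ⟨1, by decide, by simp [sepPref_top]⟩
          · exact ⟨2, by decide, by simp [sepPref_top]⟩
      have hgE : g (({0, 1, 2} : Finset ℕ).erase 0)
          (fun j hj => (fun j _ => if j = 0 then P0
            else if j = 1 then sepPref (insert x A) else sepPref A) j
            (Finset.mem_of_mem_erase hj)) = insert x A := by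
        have hmem : ∀ j, j ∈ (({0, 1, 2} : Finset ℕ).erase 0) → j = 1 ∨ j = 2 := by decide
        rw [hg (({0, 1, 2} : Finset ℕ).erase 0) ⟨1, by decide⟩ _
          (by intro j hj
              rcases hmem j hj with rfl | rfl
              · exact Or.inl (sepPref_sep _)
              · exact Or.inl (sepPref_sep _))
          _
          (by intro j hj
              rcases hmem j hj with rfl | rfl
              · exact sepPref_sep _
              · exact sepPref_sep _)
          (fun j hj => rfl)]
        apply fGe_pair' _ A x hxA
        apply distinctTops_eq
        intro T
        constructor
        · rintro ⟨i, hi, rfl⟩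
          rcases hmem i hi with rfl | rfl <;> simp [sepPref_top, Finset.mem_insert]
        · intro hT
          simp only [Finset.mem_insert, Finset.mem_singleton] at hT
          rcases hT with rfl | rfl
          · exact ⟨1, by decide, by simp [sepPref_top]⟩
          · exact ⟨2, by decide, by simp [sepPref_top]⟩
      rw [hgN, hgE]
      exact hpref
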